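/- For n ≥ 2 and any term t in the free algebra on one n-ary symbol ⊗, t is equal to lmb(t) modulo the congruence generated by the n-Catalan equations ⊗(x₁,…,x_i, ⊗(x_{i+1},…,x_{i+n}), x_{i+n+1},…,x_{2n-1}) = ⊗(x₁,…,x_{i-1}, ⊗(x_i,…,x_{i+n-1}), x_{i+n},…,x_{2n-1}) for 0 < i < n. -/

import Mathlib

/-- Terms of the free algebra over variable set `V` with one n-ary operation ⊗. -/
inductive CTerm (n : ℕ) (V : Type*) : Type _
  | var (v : V) : CTerm n V
  | op (f : Fin n → CTerm n V) : CTerm n V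

/-- `brk i x` is the term ⊗(x₀,…,x_{i-1}, ⊗(x_i,…,x_{i+n-1}), x_{i+n},…,x_{2n-2}):
the n-ary tensor of the entries of `x` with one inner ⊗ placed at (0-based) position
`i`.  The Catalan rule α_i rewrites `brk i x` to `brk (i-1) x` for `0 < i < n`. -/
def brk {n : ℕ} {V : Type*} (i : ℕ) (x : ℕ → CTerm n V) : CTerm n V :=
  .op fun j => if (j : ℕ) < i then x (j : ℕ)
    else if (j : ℕ) = i then .op (fun k : Fin n => x (i + (k : ℕ)))
    else x ((j : ℕ) + n - 1)

/-- One rewrite step of the Catalan rewriting system: a rule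
α_i : ⊗(x₁,…,x_i, ⊗(x_{i+1},…,x_{i+n}), x_{i+n+1},…,x_{2n-1}) →
⊗(x₁,…,x_{i-1}, ⊗(x_i,…,x_{i+n-1}), x_{i+n},…,x_{2n-1}) (for 0 < i < n) applied at
some subterm position, with arbitrary terms substituted for the variables. -/
inductive CStep {n : ℕ} {V : Type*} : CTerm n V → CTerm n V → Prop
  | rule (i : ℕ) (h1 : 0 < i) (h2 : i < n) (x : ℕ → CTerm n V) :
      CStep (brk i x) (brk (i - 1) x)
  | congr {f g : Fin n → CTerm n V} (i : Fin n) :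
      CStep (f i) (g i) → (∀ j, j ≠ i → f j = g j) → CStep (.op f) (.op g)

/-- The underlying list of a term: its left-to-right sequence of variables. -/
def uList {n : ℕ} {V : Type*} : CTerm n V → List V
  | .var v => [v]
  | .op f => (List.ofFn fun i : Fin n => uList (f i)).flatten

/-- A term is a left-most bracketing iff every occurrence of ⊗ is nested in the first
argument only: all arguments other than the first are variables. -/
def IsLmb {n : ℕ} {V : Type*} : CTerm n V → Prop
  | .var _ => True
  | .op f => (∀ i : Fin n, (i : ℕ) = 0 → IsLmb (f i)) ∧
      (∀ i : Fin n, (i : ℕ) ≠ 0 → ∃ v, f i = .var v)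

/-- The smallest congruence on the free term algebra generated by all substitution
instances of the n-Catalan equations applied at arbitrary subterm positions. -/
inductive CnEq {n : ℕ} {V : Type*} : CTerm n V → CTerm n V → Prop
  | base (i : ℕ) (h1 : 0 < i) (h2 : i < n) (x : ℕ → CTerm n V) :
      CnEq (brk i x) (brk (i - 1) x)
  | refl (t : CTerm n V) : CnEq t t
  | symm {s t : CTerm n V} : CnEq s t → CnEq t s
  | trans {s t u : CTerm n V} : CnEq s t → CnEq t u → CnEq s u
  | congr {f g : Fin n → CTerm n V} : (∀ i, CnEq (f i) (g i)) → CnEq (.op f) (.op g)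

namespace Stmt12Aux
variable {n : ℕ} {V : Type*}

def csize {n : ℕ} {V : Type*} : CTerm n V → ℕ
  | .var _ => 1
  | .op f => 1 + (List.ofFn fun i => csize (f i)).sum

lemma csize_lt (f : Fin n → CTerm n V) (i : Fin n) : csize (f i) < csize (.op f) := by
  have hm : csize (f i) ∈ List.ofFn fun i => csize (f i) := by
    rw [List.mem_ofFn]; exact ⟨i, rfl⟩
  have := List.single_le_sum (l := List.ofFn fun i => csize (f i)) (fun x _ => Nat.zero_le x) _ hm
  simp only [csize]; omega

lemma flatten_ofFn (m : ℕ) (F : ℕ → List V) :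
    (List.ofFn fun j : Fin m => F j).flatten = (List.range m).flatMap F := by
  induction m generalizing F with
  | zero => simp
  | succ m ih =>
      rw [List.ofFn_succ, List.range_succ_eq_map]
      simp only [List.flatten_cons, List.flatMap_cons, List.flatMap_map]
      congr 1
      exact ih (fun j => F (j+1))

lemma range_flatMap_add (a b : ℕ) (F : ℕ → List V) :
    (List.range (a+b)).flatMap F
      = (List.range a).flatMap F ++ (List.range b).flatMap (fun m => F (a+m)) := by
  rw [List.range_add]; simp [List.flatMap_append, List.flatMap_map]

lemma split3 (F : ℕ → List V) (a b c : ℕ) :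
    (List.range (a + (b + c))).flatMap F
      = (List.range a).flatMap F ++ ((List.range b).flatMap (fun m => F (a+m))
        ++ (List.range c).flatMap (fun m => F (a+(b+m)))) := by
  rw [range_flatMap_add, range_flatMap_add]

def Efun (i : ℕ) (x : ℕ → CTerm n V) : ℕ → List V := fun m =>
  if m < i then uList (x m)
  else if m = i then (List.range n).flatMap (fun k => uList (x (i+k)))
  else uList (x (m+n-1))

lemma uList_brk {i : ℕ} (hi : i < n) (x : ℕ → CTerm n V) :
    uList (brk i x) = (List.range (2*n-1)).flatMap (fun m => uList (x m)) := by
  have hn1 : 1 ≤ n := by omega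
  have step1 : uList (brk i x) = (List.range n).flatMap (Efun i x) := by
    rw [← flatten_ofFn n (Efun i x)]
    show (List.ofFn fun j : Fin n => uList (if (j : ℕ) < i then x (j : ℕ)
      else if (j : ℕ) = i then .op (fun k : Fin n => x (i + (k : ℕ)))
      else x ((j : ℕ) + n - 1))).flatten = _
    refine congrArg List.flatten (congrArg List.ofFn (funext fun j => ?_))
    by_cases h1 : (j:ℕ) < i
    · simp [Efun, h1]
    · by_cases h2 : (j:ℕ) = i
      · simp only [Efun, if_neg h1, if_pos h2]
        show (List.ofFn fun k : Fin n => uList (x (i + (k:ℕ)))).flatten = _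
        exact flatten_ofFn n (fun k => uList (x (i+k)))
      · simp [Efun, h1, h2]
  rw [step1]
  have hs1 : n = i + (1 + (n - 1 - i)) := by omega
  have hs2 : 2*n-1 = i + (n + (n - 1 - i)) := by omega
  have L1 := split3 (Efun i x) i 1 (n-1-i)
  rw [← hs1] at L1
  have R1 := split3 (fun m => uList (x m)) i n (n-1-i)
  rw [← hs2] at R1
  rw [L1, R1]
  congr 1
  · apply List.flatMap_congr; intro m hm
    rw [List.mem_range] at hm
    simp [Efun, hm]
  congr 1
  · rw [show List.range 1 = [0] from rfl]
    simp [Efun]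
  · apply List.flatMap_congr; intro m hm
    have h1 : ¬ (i + (1 + m) < i) := by omega
    have h2 : ¬ (i + (1 + m) = i) := by omega
    simp only [Efun, h1, if_false, h2]
    have he : i + (1 + m) + n - 1 = i + (n + m) := by omega
    rw [he]

lemma cnEq_uList {s t : CTerm n V} (h : CnEq s t) : uList s = uList t := by
  induction h with
  | base i h1 h2 x => rw [uList_brk h2 x, uList_brk (by omega) x]
  | refl t => rfl
  | symm _ ih => exact ih.symm
  | trans _ _ ih1 ih2 => exact ih1.trans ih2
  | congr _ ih =>
      show (List.ofFn _).flatten = (List.ofFn _).flatten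
      congr 1
      exact congrArg List.ofFn (funext ih)



def Qfun (k : ℕ) (f g : Fin n → CTerm n V) (hk : k < n) : ℕ → CTerm n V := fun m =>
  if h : m < k + 1 then f ⟨m, by omega⟩
  else if h' : m < k + 1 + n then g ⟨m - (k+1), by omega⟩
  else if h2 : m - n + 1 < n then f ⟨m - n + 1, h2⟩ else f ⟨0, by omega⟩

lemma Qfun_lo {k : ℕ} {f g : Fin n → CTerm n V} {hk : k < n} {m : ℕ}
    (h : m < k + 1) (hm : m < n) : Qfun k f g hk m = f ⟨m, hm⟩ := by
  simp only [Qfun]; rw [dif_pos h]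

lemma Qfun_mid {k : ℕ} {f g : Fin n → CTerm n V} {hk : k < n} {m : ℕ}
    (h1 : k + 1 ≤ m) (h2 : m < k + 1 + n) :
    Qfun k f g hk m = g ⟨m - (k+1), by omega⟩ := by
  simp only [Qfun]; rw [dif_neg (by omega), dif_pos h2]

lemma Qfun_hi {k : ℕ} {f g : Fin n → CTerm n V} {hk : k < n} {m : ℕ}
    (h1 : k + 1 + n ≤ m) (h2 : m - n + 1 < n) :
    Qfun k f g hk m = f ⟨m - n + 1, h2⟩ := by
  simp only [Qfun]; rw [dif_neg (by omega), dif_neg (by omega), dif_pos h2]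

lemma op_eq_brk (k : ℕ) (hk : k + 1 < n) (f g : Fin n → CTerm n V)
    (hB : f ⟨k+1, hk⟩ = .op g) :
    CTerm.op f = brk (k+1) (Qfun k f g (by omega)) := by
  show CTerm.op f = CTerm.op _
  congr 1
  funext j
  by_cases h1 : (j:ℕ) < k + 1
  · rw [if_pos h1, Qfun_lo h1 j.isLt, Fin.eta]
  · by_cases h2 : (j:ℕ) = k + 1
    · rw [if_neg h1, if_pos h2]
      have : (fun q : Fin n => Qfun k f g (by omega : k < n) (k + 1 + (q:ℕ))) = g := by
        funext q
        rw [Qfun_mid (by omega) (by omega)]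
        congr 1
        exact Fin.ext (by simp)
      rw [this, ← hB]
      exact congrArg f (Fin.ext h2)
    · rw [if_neg h1, if_neg h2,
        Qfun_hi (by omega) (by omega : (j:ℕ) + n - 1 - n + 1 < n)]
      exact congrArg f (Fin.ext (by simp; omega))

lemma lemP (hn : 2 ≤ n) : ∀ (N : ℕ) (f : Fin n → CTerm n V),
    csize (f ⟨1, by omega⟩) < N →
    (∀ j : Fin n, (j:ℕ) < 2 → IsLmb (f j)) →
    (∀ j : Fin n, 2 ≤ (j:ℕ) → ∃ w, f j = .var w) →
    ∃ u, IsLmb u ∧ CnEq (.op f) u := by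
  intro N
  induction N with
  | zero => exact fun f h => absurd h (Nat.not_lt_zero _)
  | succ N ih =>
    intro f hsz hA hv
    have hone : (1:ℕ) < n := by omega
    cases hB : f ⟨1, hone⟩ with
    | var w =>
        refine ⟨.op f, ⟨fun j hj => hA j (by omega), fun j hj => ?_⟩, .refl _⟩
        by_cases h2 : 2 ≤ (j:ℕ)
        · exact hv j h2
        · have he : j = ⟨1, hone⟩ := Fin.ext (by show (j:ℕ) = 1; omega)
          exact he ▸ ⟨w, hB⟩
    | op g =>
        have h0n : (0:ℕ) < n := by omega
        have hg : IsLmb (.op g) := hB ▸ hA ⟨1, hone⟩ (by exact one_lt_two)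
        obtain ⟨hg0, hgv⟩ := hg
        have e1 : CTerm.op f = brk 1 (Qfun 0 f g h0n) := op_eq_brk 0 hone f g hB
        have step : CnEq (CTerm.op f) (brk 0 (Qfun 0 f g h0n)) := by
          rw [e1]; exact CnEq.base 1 one_pos hone (Qfun 0 f g h0n)
        have hin0 : Qfun 0 f g h0n (0 + (0:ℕ)) = f ⟨0, h0n⟩ := Qfun_lo (by omega) h0n
        have hin1 : Qfun 0 f g h0n (0 + (1:ℕ)) = g ⟨0, h0n⟩ := by
          rw [Qfun_mid (by omega) (by omega)]
        have hsz' : csize ((fun q : Fin n => Qfun 0 f g h0n (0 + (q:ℕ))) ⟨1, by omega⟩) < N := by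
          have h1 := csize_lt g ⟨0, h0n⟩
          have h2 : csize (f ⟨1, hone⟩) = csize (CTerm.op g) := by rw [hB]
          show csize (Qfun 0 f g h0n (0 + (1:ℕ))) < N
          rw [hin1]
          omega
        obtain ⟨C, hC, hCe⟩ := ih (fun q : Fin n => Qfun 0 f g h0n (0 + (q:ℕ))) hsz'
          (fun q hq => by
            show IsLmb (Qfun 0 f g h0n (0 + (q:ℕ)))
            rcases (by omega : (q:ℕ) = 0 ∨ (q:ℕ) = 1) with h | h
            · rw [h, hin0]; exact hA _ (by exact Nat.zero_lt_two)
            · rw [h, hin1]; exact hg0 _ rfl)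
          (fun q hq => by
            show ∃ w, Qfun 0 f g h0n (0 + (q:ℕ)) = .var w
            rw [Qfun_mid (by omega) (by omega)]
            exact hgv _ (by simp; omega))
        refine ⟨.op (fun j : Fin n => if (j:ℕ) = 0 then C
          else Qfun 0 f g h0n ((j:ℕ) + n - 1)), ?_, ?_⟩
        · refine ⟨fun j hj => ?_, fun j hj => ?_⟩
          · show IsLmb (if (j:ℕ) = 0 then C else Qfun 0 f g h0n ((j:ℕ) + n - 1))
            rw [if_pos hj]; exact hC
          · show ∃ v, (if (j:ℕ) = 0 then C else Qfun 0 f g h0n ((j:ℕ) + n - 1)) = .var v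
            rw [if_neg hj]
            by_cases h1 : (j:ℕ) = 1
            · rw [Qfun_mid (by omega) (by omega)]
              exact hgv _ (by simp; omega)
            · have h2 : 2 ≤ (j:ℕ) := by omega
              rw [Qfun_hi (by omega) (by omega)]
              obtain ⟨w, hw⟩ := hv j h2
              refine ⟨w, ?_⟩
              rw [show (⟨(j:ℕ) + n - 1 - n + 1, by omega⟩ : Fin n) = j from Fin.ext (by simp; omega), hw]
        · refine step.trans ?_
          show CnEq (CTerm.op fun j : Fin n => if (j:ℕ) < 0 then Qfun 0 f g h0n (j:ℕ)
            else if (j:ℕ) = 0 then .op (fun q : Fin n => Qfun 0 f g h0n (0 + (q:ℕ)))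
            else Qfun 0 f g h0n ((j:ℕ) + n - 1)) _
          apply CnEq.congr
          intro j
          by_cases hj : (j:ℕ) = 0
          · show CnEq (if (j:ℕ) < 0 then Qfun 0 f g h0n (j:ℕ)
              else if (j:ℕ) = 0 then .op (fun q : Fin n => Qfun 0 f g h0n (0 + (q:ℕ)))
              else Qfun 0 f g h0n ((j:ℕ) + n - 1))
              (if (j:ℕ) = 0 then C else Qfun 0 f g h0n ((j:ℕ) + n - 1))
            rw [if_neg (by omega), if_pos hj, if_pos hj]
            exact hCe
          · show CnEq (if (j:ℕ) < 0 then Qfun 0 f g h0n (j:ℕ)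
              else if (j:ℕ) = 0 then .op (fun q : Fin n => Qfun 0 f g h0n (0 + (q:ℕ)))
              else Qfun 0 f g h0n ((j:ℕ) + n - 1))
              (if (j:ℕ) = 0 then C else Qfun 0 f g h0n ((j:ℕ) + n - 1))
            rw [if_neg (by omega), if_neg hj, if_neg hj]
            exact .refl _

lemma lemQ (hn : 2 ≤ n) : ∀ (k : ℕ) (f : Fin n → CTerm n V),
    (∀ j, IsLmb (f j)) →
    (∀ j : Fin n, k < (j:ℕ) → ∃ w, f j = .var w) →
    ∃ u, IsLmb u ∧ CnEq (.op f) u := by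
  intro k
  induction k with
  | zero =>
      intro f hL hv
      exact ⟨.op f, ⟨fun j _ => hL j, fun j hj => hv j (by omega)⟩, .refl _⟩
  | succ k ih =>
      intro f hL hv
      by_cases hk : k + 1 < n
      · cases hB : f ⟨k+1, hk⟩ with
        | var w =>
            apply ih f hL
            intro j hj
            by_cases h : (j:ℕ) = k+1
            · have he : j = ⟨k+1, hk⟩ := Fin.ext h
              exact he ▸ ⟨w, hB⟩
            · exact hv j (by omega)
        | op g =>
            have hkn : k < n := by omega
            obtain ⟨hg0, hgv⟩ := (show IsLmb (.op g) from hB ▸ hL ⟨k+1, hk⟩)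
            have e1 : CTerm.op f = brk (k+1) (Qfun k f g hkn) := op_eq_brk k hk f g hB
            have step : CnEq (CTerm.op f) (brk k (Qfun k f g hkn)) := by
              rw [e1]
              exact CnEq.base (k+1) (Nat.succ_pos k) hk (Qfun k f g hkn)
            have hq0 : Qfun k f g hkn (k + (0:ℕ)) = f ⟨k, hkn⟩ := Qfun_lo (by omega) hkn
            have hq1 : Qfun k f g hkn (k + (1:ℕ)) = g ⟨0, by omega⟩ := by
              rw [Qfun_mid (by omega) (by omega)]
              congr 1
              exact Fin.ext (by show k+1-(k+1) = 0; omega)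
            obtain ⟨C, hC, hCe⟩ := lemP hn
              (csize ((fun q : Fin n => Qfun k f g hkn (k + (q:ℕ))) ⟨1, by omega⟩) + 1)
              (fun q : Fin n => Qfun k f g hkn (k + (q:ℕ)))
              (Nat.lt_succ_self _)
              (fun q hq => by
                show IsLmb (Qfun k f g hkn (k + (q:ℕ)))
                rcases (by omega : (q:ℕ) = 0 ∨ (q:ℕ) = 1) with h | h
                · rw [h, hq0]; exact hL _
                · rw [h, hq1]; exact hg0 _ rfl)
              (fun q hq => by
                show ∃ w, Qfun k f g hkn (k + (q:ℕ)) = .var w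
                rw [Qfun_mid (by omega) (by omega)]
                exact hgv _ (by simp; omega))
            have step2 : CnEq (brk k (Qfun k f g hkn)) (.op (fun j : Fin n =>
                if (j:ℕ) < k then Qfun k f g hkn (j:ℕ)
                else if (j:ℕ) = k then C
                else Qfun k f g hkn ((j:ℕ) + n - 1))) := by
              show CnEq (CTerm.op fun j : Fin n => if (j:ℕ) < k then Qfun k f g hkn (j:ℕ)
                else if (j:ℕ) = k then .op (fun q : Fin n => Qfun k f g hkn (k + (q:ℕ)))
                else Qfun k f g hkn ((j:ℕ) + n - 1)) _
              apply CnEq.congr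
              intro j
              try dsimp only
              by_cases h1 : (j:ℕ) < k
              · rw [if_pos h1, if_pos h1]; exact .refl _
              · by_cases h2 : (j:ℕ) = k
                · rw [if_neg h1, if_neg h1, if_pos h2, if_pos h2]; exact hCe
                · rw [if_neg h1, if_neg h1, if_neg h2, if_neg h2]; exact .refl _
            obtain ⟨u, hu, hue⟩ := ih
              (fun j : Fin n => if (j:ℕ) < k then Qfun k f g hkn (j:ℕ)
                else if (j:ℕ) = k then C
                else Qfun k f g hkn ((j:ℕ) + n - 1))
              (fun j => by
                try dsimp only
                by_cases h1 : (j:ℕ) < k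
                · rw [if_pos h1, Qfun_lo (by omega) j.isLt, Fin.eta]; exact hL j
                · by_cases h2 : (j:ℕ) = k
                  · rw [if_neg h1, if_pos h2]; exact hC
                  · rw [if_neg h1, if_neg h2]
                    by_cases h3 : (j:ℕ) = k + 1
                    · rw [Qfun_mid (by omega) (by omega)]
                      obtain ⟨w, hw⟩ := hgv ⟨(j:ℕ) + n - 1 - (k+1), by omega⟩ (by simp; omega)
                      rw [hw]; trivial
                    · rw [Qfun_hi (by omega) (by omega),
                        show (⟨(j:ℕ) + n - 1 - n + 1, by omega⟩ : Fin n) = j from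
                          Fin.ext (by simp; omega)]
                      exact hL j)
              (fun j hj => by
                show ∃ w, (if (j:ℕ) < k then Qfun k f g hkn (j:ℕ)
                  else if (j:ℕ) = k then C
                  else Qfun k f g hkn ((j:ℕ) + n - 1)) = .var w
                rw [if_neg (by omega), if_neg (by omega)]
                by_cases h3 : (j:ℕ) = k + 1
                · rw [Qfun_mid (by omega) (by omega)]
                  exact hgv _ (by simp; omega)
                · rw [Qfun_hi (by omega) (by omega),
                    show (⟨(j:ℕ) + n - 1 - n + 1, by omega⟩ : Fin n) = j from
                      Fin.ext (by simp; omega)]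
                  exact hv j (by omega))
            exact ⟨u, hu, (step.trans step2).trans hue⟩
      · exact ih f hL (fun j hj => absurd j.isLt (by omega))

theorem stmt_12_aux {n : ℕ} (hn : 2 ≤ n) {V : Type*} (t : CTerm n V) :
    ∃ u : CTerm n V, IsLmb u ∧ uList u = uList t ∧ CnEq t u := by
  induction t with
  | var v => exact ⟨.var v, trivial, rfl, .refl _⟩
  | op f ih =>
      choose u hu hul hc using ih
      have step : CnEq (.op f) (.op u) := CnEq.congr hc
      obtain ⟨w, hw, hwe⟩ := lemQ hn n u hu (fun j hj => absurd j.isLt (by omega))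
      exact ⟨w, hw, (cnEq_uList (step.trans hwe)).symm, step.trans hwe⟩

end Stmt12Aux

/-- modulo the congruence generated by the n-Catalan equations, every
term is equal to its left-most bracketing (the left-most bracketed term with the same
underlying variable list). -/
theorem stmt_12 {n : ℕ} (hn : 2 ≤ n) {V : Type*} (t : CTerm n V) :
    ∃ u : CTerm n V, IsLmb u ∧ uList u = uList t ∧ CnEq t u :=
  Stmt12Aux.stmt_12_aux hn t
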